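/- arXiv:2311.07440 — 2 statements merged into one kernel-verified Lean document; each statement's English description precedes it below -/
import Mathlib

section
/- For the harmonic functions u_n(z) = z^{n−1} on ℂ and radii 0 < r1 < r2 < r3, equality holds in the three-ball inequality: ‖u_n‖_{L²(B(r2))} = ‖u_n‖_{L²(B(r1))}^α · ‖u_n‖_{L²(B(r3))}^{1−α}, where α = (log r3 − log r2)/(log r3 − log r1). -/
open Real MeasureTheory
open Metric

lemma integrableOn_aux (n : ℕ) (ρ : ℝ) :
    IntegrableOn (fun z : ℂ => ‖z ^ n‖ ^ 2) (ball (0 : ℂ) ρ) := by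
  have hc : Continuous fun z : ℂ => ‖z ^ n‖ ^ 2 := by continuity
  exact (hc.continuousOn.integrableOn_compact (isCompact_closedBall _ _)).mono_set
    ball_subset_closedBall

lemma abs_half : ‖((1:ℂ)/2)‖ = 1/2 := by
  rw [show ((1:ℂ)/2) = ((1/2 : ℝ) : ℂ) by norm_num, Complex.norm_real, Real.norm_eq_abs]; norm_num

lemma unit_pos (n : ℕ) :
    0 < ∫ z in ball (0 : ℂ) 1, ‖z ^ n‖ ^ 2 := by
  rw [setIntegral_pos_iff_support_of_nonneg_ae]
  · refine lt_of_lt_of_le (measure_ball_pos volume ((1:ℂ)/2) (by norm_num : (0:ℝ) < 1/4))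
      (measure_mono ?_)
    intro z hz
    simp only [mem_ball, Complex.dist_eq] at hz
    have hz0 : z ≠ 0 := by
      intro h
      rw [h, zero_sub, norm_neg, abs_half] at hz
      norm_num at hz
    refine ⟨?_, ?_⟩
    · have h1 := norm_pos_iff.2 (pow_ne_zero n hz0)
      exact Function.mem_support.2 (pow_pos h1 2).ne'
    · simp only [mem_ball, Complex.dist_eq, sub_zero]
      calc ‖z‖ = ‖z - 1/2 + 1/2‖ := by rw [sub_add_cancel]
        _ ≤ ‖z - 1/2‖ + ‖(1/2 : ℂ)‖ := norm_add_le _ _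
        _ < 1 := by rw [abs_half]; linarith
  · filter_upwards with z; positivity
  · exact integrableOn_aux n 1

lemma scaling (n : ℕ) {ρ : ℝ} (hρ : 0 < ρ) :
    ∫ z in ball (0 : ℂ) ρ, ‖z ^ n‖ ^ 2
      = ρ ^ (2 * n + 2) * ∫ z in ball (0 : ℂ) 1, ‖z ^ n‖ ^ 2 := by
  have h := MeasureTheory.Measure.setIntegral_comp_smul_of_pos (volume : Measure ℂ)
    (fun z : ℂ => ‖z ^ n‖ ^ 2) (ball (0 : ℂ) 1) hρ
  rw [smul_unitBall_of_pos hρ, Complex.finrank_real_complex, smul_eq_mul] at h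
  have h2 : ∀ z : ℂ, ‖(ρ • z) ^ n‖ ^ 2 = ρ ^ (2 * n) * ‖z ^ n‖ ^ 2 := by
    intro z
    rw [Complex.real_smul, mul_pow, norm_mul, norm_pow, Complex.norm_real, Real.norm_eq_abs, abs_of_pos hρ]
    ring
  simp only [h2] at h
  rw [integral_const_mul] at h
  have hρ2 : (ρ:ℝ) ^ 2 ≠ 0 := by positivity
  field_simp at h
  simp only [norm_pow] at h ⊢
  rw [← h]; ring

/-- For the harmonic functions `u_n(z) = z^(n−1)` on `ℂ` and radii
`0 < r1 < r2 < r3`, equality holds in the three-ball inequality with exponent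
`α = (log r3 − log r2)/(log r3 − log r1)`. -/
theorem stmt_4 (n : ℕ) (hn : 1 ≤ n) (r1 r2 r3 : ℝ)
    (h1 : 0 < r1) (h2 : r1 < r2) (h3 : r2 < r3) :
    (∫ z in Metric.ball (0 : ℂ) r2, ‖z ^ (n - 1)‖ ^ 2) ^ ((1 : ℝ) / 2)
      = ((∫ z in Metric.ball (0 : ℂ) r1, ‖z ^ (n - 1)‖ ^ 2) ^ ((1 : ℝ) / 2))
          ^ ((Real.log r3 - Real.log r2) / (Real.log r3 - Real.log r1)) *
        ((∫ z in Metric.ball (0 : ℂ) r3, ‖z ^ (n - 1)‖ ^ 2) ^ ((1 : ℝ) / 2))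
          ^ (1 - (Real.log r3 - Real.log r2) / (Real.log r3 - Real.log r1)) := by
  have hr2 : (0:ℝ) < r2 := h1.trans h2
  have hr3 : (0:ℝ) < r3 := hr2.trans h3
  have hc := unit_pos (n - 1)
  set c := ∫ z in ball (0:ℂ) 1, ‖z ^ (n - 1)‖ ^ 2 with hcdef
  rw [scaling (n-1) h1, scaling (n-1) hr2, scaling (n-1) hr3]
  set m : ℕ := 2 * (n - 1) + 2 with hm
  set α : ℝ := (Real.log r3 - Real.log r2) / (Real.log r3 - Real.log r1) with hα
  have p1 : (0:ℝ) < r1 ^ m * c := by positivity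
  have p2 : (0:ℝ) < r2 ^ m * c := by positivity
  have p3 : (0:ℝ) < r3 ^ m * c := by positivity
  have L12 : Real.log r1 < Real.log r2 := Real.log_lt_log h1 h2
  have L23 : Real.log r2 < Real.log r3 := Real.log_lt_log hr2 h3
  have hden : Real.log r3 - Real.log r1 ≠ 0 := sub_ne_zero.2 (L12.trans L23).ne'
  have key : α * Real.log r1 + (1 - α) * Real.log r3 = Real.log r2 := by
    rw [hα]; field_simp; ring
  have q1 : (0:ℝ) < (r1 ^ m * c) ^ ((1:ℝ)/2) := Real.rpow_pos_of_pos p1 _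
  have q2 : (0:ℝ) < (r2 ^ m * c) ^ ((1:ℝ)/2) := Real.rpow_pos_of_pos p2 _
  have q3 : (0:ℝ) < (r3 ^ m * c) ^ ((1:ℝ)/2) := Real.rpow_pos_of_pos p3 _
  have hR : (0:ℝ) < ((r1 ^ m * c) ^ ((1:ℝ)/2)) ^ α * ((r3 ^ m * c) ^ ((1:ℝ)/2)) ^ (1 - α) := by
    positivity
  rw [← Real.exp_log q2, ← Real.exp_log hR]
  congr 1
  rw [Real.log_mul (Real.rpow_pos_of_pos q1 α).ne' (Real.rpow_pos_of_pos q3 (1-α)).ne',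
    Real.log_rpow q1, Real.log_rpow q3, Real.log_rpow p1, Real.log_rpow p2, Real.log_rpow p3,
    Real.log_mul (pow_pos h1 m).ne' hc.ne', Real.log_mul (pow_pos hr2 m).ne' hc.ne',
    Real.log_mul (pow_pos hr3 m).ne' hc.ne', Real.log_pow, Real.log_pow, Real.log_pow]
  rw [hα]
  field_simp
  ring
end

section
/- Let 0 < r1 < r2 < r3 and α = (log r3 − log r2)/(log r3 − log r1). There is no constant C > 0 and exponent α̃ > α such that for all n ∈ ℕ, n ≥ 1, the functions u_n(z) = z^{n−1} satisfy ‖u_n‖_{L²(B(r2))} ≤ C · ‖u_n‖_{L²(B(r1))}^{α̃} · ‖u_n‖_{L²(B(r3))}^{1−α̃}. -/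
open Real MeasureTheory

lemma ball_int (ρ : ℝ) (hρ : 0 < ρ) (k : ℕ) :
    ∫ z in Metric.ball (0 : ℂ) ρ, ‖z ^ k‖ ^ 2
      = π / (k + 1) * ρ ^ (2 * k + 2) := by
  have h1 : ∀ z : ℂ, ‖z ^ k‖ ^ 2 = ‖z‖ ^ (2 * k) := by
    intro z
    rw [norm_pow, ← pow_mul, mul_comm]
  simp_rw [h1]
  set f : ℝ → ℝ := Set.indicator (Set.Iio ρ) (fun r => r ^ (2 * k)) with hf
  have h2 : ∫ z in Metric.ball (0 : ℂ) ρ, ‖z‖ ^ (2 * k) = ∫ z : ℂ, f ‖z‖ := by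
    rw [← integral_indicator measurableSet_ball]
    congr 1 with z
    simp [hf, Set.indicator, Metric.mem_ball, dist_zero_right]
  rw [h2, integral_fun_norm_addHaar volume f]
  have hdim : Module.finrank ℝ ℂ = 2 := Complex.finrank_real_complex
  rw [hdim]
  have hvol : (volume (Metric.ball (0 : ℂ) 1)).toReal = π := by
    simp [Complex.volume_ball]
  rw [measureReal_def, hvol]
  have h3 : ∫ y in Set.Ioi (0 : ℝ), y ^ (2 - 1) • f y
      = ∫ y in Set.Ioo (0 : ℝ) ρ, y ^ (2 * k + 1) := by
    rw [← Set.Ioi_inter_Iio (a := (0:ℝ)) (b := ρ),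
        ← integral_indicator (measurableSet_Ioi.inter measurableSet_Iio)]
    rw [← integral_indicator measurableSet_Ioi]
    congr 1 with y
    by_cases hy : y ∈ Set.Ioi (0 : ℝ) <;> by_cases hy' : y ∈ Set.Iio ρ <;>
      simp [hf, Set.indicator, hy, hy', pow_succ, mul_comm]
  rw [h3]
  have h4 : ∫ y in Set.Ioo (0 : ℝ) ρ, y ^ (2 * k + 1)
      = (ρ ^ (2 * k + 2) - 0 ^ (2 * k + 2)) / (2 * k + 2) := by
    rw [← integral_Ioc_eq_integral_Ioo, ← intervalIntegral.integral_of_le hρ.le,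
        integral_pow]
    push_cast
    ring_nf
  rw [h4]
  simp only [smul_eq_mul, nsmul_eq_mul]
  rw [zero_pow (by omega)]
  push_cast
  field_simp
  ring

/-- Sharpness of the three-ball exponent: there is no `C > 0` and
`α̃ > α = (log r3 − log r2)/(log r3 − log r1)` such that for all `n ≥ 1` the
functions `u_n(z) = z^(n−1)` satisfy
`‖u_n‖_{L²(B(r2))} ≤ C ‖u_n‖_{L²(B(r1))}^α̃ ‖u_n‖_{L²(B(r3))}^(1−α̃)`. -/
theorem stmt_5 (r1 r2 r3 : ℝ) (h1 : 0 < r1) (h2 : r1 < r2) (h3 : r2 < r3) :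
    ¬ ∃ C : ℝ, 0 < C ∧ ∃ α' : ℝ,
      (Real.log r3 - Real.log r2) / (Real.log r3 - Real.log r1) < α' ∧
      ∀ n : ℕ, 1 ≤ n →
        (∫ z in Metric.ball (0 : ℂ) r2, ‖z ^ (n - 1)‖ ^ 2) ^ ((1 : ℝ) / 2)
          ≤ C *
            ((∫ z in Metric.ball (0 : ℂ) r1, ‖z ^ (n - 1)‖ ^ 2) ^ ((1 : ℝ) / 2)) ^ α' *
            ((∫ z in Metric.ball (0 : ℂ) r3, ‖z ^ (n - 1)‖ ^ 2) ^ ((1 : ℝ) / 2)) ^ (1 - α') := by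
  rintro ⟨C, hC, α', hα, hbd⟩
  have h01 : 0 < r2 := h1.trans h2
  have h02 : 0 < r3 := h01.trans h3
  set l1 := Real.log r1
  set l2 := Real.log r2
  set l3 := Real.log r3
  have hL : 0 < l3 - l1 := sub_pos.2 (Real.log_lt_log h1 (h2.trans h3))
  set δ := l2 - α' * l1 - (1 - α') * l3 with hδdef
  have hδ : 0 < δ := by
    have : l3 - l2 < α' * (l3 - l1) := (div_lt_iff₀ hL).mp hα
    have hδeq : δ = α' * (l3 - l1) - (l3 - l2) := by rw [hδdef]; ring
    linarith [hδeq ▸ sub_pos.2 this]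
  obtain ⟨n, hn⟩ := exists_nat_gt (max 1 (Real.log C / δ))
  have hn1 : 1 ≤ n := by
    have := (le_max_left 1 (Real.log C / δ)).trans hn.le
    exact_mod_cast Nat.one_le_iff_ne_zero.mpr (by rintro rfl; norm_num at this)
  have hnpos : (0 : ℝ) < n := by exact_mod_cast hn1
  have hbig : Real.log C < (n : ℝ) * δ := by
    have := (le_max_right 1 (Real.log C / δ)).trans_lt hn
    calc Real.log C = Real.log C / δ * δ := by field_simp
      _ < (n : ℝ) * δ := by exact mul_lt_mul_of_pos_right this hδ
  -- rewrite integrals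
  have hk : (n - 1 : ℕ) + 1 = n := Nat.succ_pred_eq_of_pos hn1
  have hint : ∀ ρ : ℝ, 0 < ρ →
      (∫ z in Metric.ball (0 : ℂ) ρ, ‖z ^ (n - 1)‖ ^ 2)
        = π / n * ρ ^ (2 * n) := by
    intro ρ hρ
    rw [ball_int ρ hρ (n - 1)]
    have h2k : 2 * (n - 1) + 2 = 2 * n := by omega
    have hcast : ((n - 1 : ℕ) : ℝ) + 1 = (n : ℝ) := by exact_mod_cast hk
    rw [h2k, hcast]
  have hbd' := hbd n hn1
  rw [hint r1 h1, hint r2 h01, hint r3 h02] at hbd'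
  set g : ℝ → ℝ := fun ρ => (π / n * ρ ^ (2 * n)) ^ ((1:ℝ)/2) with hg
  have hgpos : ∀ ρ : ℝ, 0 < ρ → 0 < g ρ := fun ρ hρ =>
    Real.rpow_pos_of_pos (by positivity) _
  have hlogg : ∀ ρ : ℝ, 0 < ρ →
      Real.log (g ρ) = (1/2) * (Real.log (π / n)) + (n : ℝ) * Real.log ρ := by
    intro ρ hρ
    rw [hg]
    rw [Real.log_rpow (by positivity), Real.log_mul (by positivity) (by positivity),
        Real.log_pow]
    push_cast
    ring
  have hlog : Real.log (g r2) ≤ Real.log C + α' * Real.log (g r1)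
      + (1 - α') * Real.log (g r3) := by
    have hstep : Real.log (g r2) ≤
        Real.log (C * g r1 ^ α' * g r3 ^ (1 - α')) := by
      apply Real.log_le_log (hgpos r2 h01)
      exact hbd'
    rw [Real.log_mul (by positivity) (by positivity),
        Real.log_mul (ne_of_gt hC) (by positivity),
        Real.log_rpow (hgpos r1 h1), Real.log_rpow (hgpos r3 h02)] at hstep
    linarith
  rw [hlogg r1 h1, hlogg r2 h01, hlogg r3 h02] at hlog
  have key : (n : ℝ) * δ ≤ Real.log C := by
    rw [hδdef]; nlinarith [hlog]
  linarith
end
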